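/- For each t ∈ [0, +∞) let Q^t be a map from ℳ to ℳ, and suppose the family Q satisfies part (ii) of Hypotheses 5. Then for every c ∈ ℝ, every u ∈ ℳ, and every point x ∈ ℝ at which u is continuous, one has lim_{t→0⁺} (Q^t[u])(x − ct) = u(x). -/

import Mathlib

open MeasureTheory Filter Topology

/-- `ℳ`: monotone nondecreasing, left continuous functions with values in `[0,1]`. -/
def IsM (u : ℝ → ℝ) : Prop :=
  Monotone u ∧ (∀ x : ℝ, ContinuousWithinAt u (Set.Iic x) x) ∧
    ∀ x : ℝ, u x ∈ Set.Icc (0 : ℝ) 1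

/-- Lemma 12. -/
theorem lemma12 (Q : ℝ → (ℝ → ℝ) → (ℝ → ℝ))
    (maps : ∀ t : ℝ, 0 ≤ t → ∀ u, IsM u → IsM (Q t u))
    (cont : ∀ (tk : ℕ → ℝ), (∀ k, 0 ≤ tk k) → Tendsto tk atTop (𝓝 0) →
      ∀ u, IsM u → ∀ᵐ x : ℝ ∂volume, Tendsto (fun k => Q (tk k) u x) atTop (𝓝 (u x)))
    (c : ℝ) (u : ℝ → ℝ) (hu : IsM u) (x : ℝ) (hx : ContinuousAt u x) :
    Tendsto (fun t : ℝ => Q t u (x - c * t)) (𝓝[>] 0) (𝓝 (u x)) := by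
  rw [tendsto_iff_seq_tendsto]
  intro s hs
  have hs0 : Tendsto s atTop (𝓝 0) := hs.mono_right nhdsWithin_le_nhds
  have hspos : ∀ᶠ k in atTop, s k ∈ Set.Ioi (0 : ℝ) := hs self_mem_nhdsWithin
  set tk : ℕ → ℝ := fun k => max (s k) 0 with htk
  have htk0 : ∀ k, 0 ≤ tk k := fun k => le_max_right _ _
  have htklim : Tendsto tk atTop (𝓝 0) := by
    have : Tendsto (fun k => max (s k) 0) atTop (𝓝 (max 0 0)) :=
      hs0.max tendsto_const_nhds
    simpa using this
  have hae := cont tk htk0 htklim u hu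
  rw [ae_iff] at hae
  have pick : ∀ a b : ℝ, a < b →
      ∃ y ∈ Set.Ioo a b, Tendsto (fun k => Q (tk k) u y) atTop (𝓝 (u y)) := by
    intro a b hab
    by_contra h
    push_neg at h
    have hsub : Set.Ioo a b ⊆
        {y : ℝ | ¬ Tendsto (fun k => Q (tk k) u y) atTop (𝓝 (u y))} :=
      fun y hy => h y hy
    have hle := measure_mono (μ := volume) hsub
    rw [hae] at hle
    have hIoo : volume (Set.Ioo a b) = 0 := le_antisymm hle zero_le
    rw [Real.volume_Ioo] at hIoo
    have : b - a ≤ 0 := by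
      by_contra hba
      push_neg at hba
      exact (ENNReal.ofReal_pos.2 hba).ne' hIoo
    linarith
  have key : Tendsto (fun k => Q (tk k) u (x - c * tk k)) atTop (𝓝 (u x)) := by
    rw [Metric.tendsto_atTop]
    intro ε hε
    obtain ⟨δ, hδ, hδ'⟩ := Metric.continuousAt_iff.1 hx (ε / 2) (by positivity)
    obtain ⟨y₁, hy₁, hy₁T⟩ := pick (x - δ) x (by linarith)
    obtain ⟨y₂, hy₂, hy₂T⟩ := pick x (x + δ) (by linarith)
    have hd₁ : |u y₁ - u x| < ε / 2 := by
      have := hδ' (x := y₁) (by rw [Real.dist_eq]; rw [abs_lt]; constructor <;>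
        [linarith [hy₁.1]; linarith [hy₁.2]])
      rwa [Real.dist_eq] at this
    have hd₂ : |u y₂ - u x| < ε / 2 := by
      have := hδ' (x := y₂) (by rw [Real.dist_eq]; rw [abs_lt]; constructor <;>
        [linarith [hy₂.1]; linarith [hy₂.2]])
      rwa [Real.dist_eq] at this
    have harg : Tendsto (fun k => x - c * tk k) atTop (𝓝 x) := by
      have : Tendsto (fun k => x - c * tk k) atTop (𝓝 (x - c * 0)) :=
        tendsto_const_nhds.sub (tendsto_const_nhds.mul htklim)
      simpa using this
    have ev1 : ∀ᶠ k in atTop, x - c * tk k ∈ Set.Ioo y₁ y₂ :=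
      harg (isOpen_Ioo.mem_nhds ⟨hy₁.2, hy₂.1⟩)
    have ev2 : ∀ᶠ k in atTop, |Q (tk k) u y₁ - u y₁| < ε / 2 := by
      have := (Metric.tendsto_atTop.1 hy₁T) (ε / 2) (by positivity)
      obtain ⟨N, hN⟩ := this
      exact eventually_atTop.2 ⟨N, fun k hk => by
        have := hN k hk; rwa [Real.dist_eq] at this⟩
    have ev3 : ∀ᶠ k in atTop, |Q (tk k) u y₂ - u y₂| < ε / 2 := by
      have := (Metric.tendsto_atTop.1 hy₂T) (ε / 2) (by positivity)
      obtain ⟨N, hN⟩ := this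
      exact eventually_atTop.2 ⟨N, fun k hk => by
        have := hN k hk; rwa [Real.dist_eq] at this⟩
    obtain ⟨N, hN⟩ := eventually_atTop.1 ((ev1.and ev2).and ev3)
    refine ⟨N, fun k hk => ?_⟩
    obtain ⟨⟨h1, h2⟩, h3⟩ := hN k hk
    have mono : Monotone (Q (tk k) u) := (maps (tk k) (htk0 k) u hu).1
    have l1 : Q (tk k) u y₁ ≤ Q (tk k) u (x - c * tk k) := mono h1.1.le
    have l2 : Q (tk k) u (x - c * tk k) ≤ Q (tk k) u y₂ := mono h1.2.le
    rw [Real.dist_eq, abs_lt]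
    rw [abs_lt] at h2 h3 hd₁ hd₂
    constructor <;> linarith
  refine key.congr' ?_
  filter_upwards [hspos] with k hk
  have : tk k = s k := max_eq_left (le_of_lt hk)
  simp [Function.comp, this]
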